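/- Exact error of the truncation method: for any δ > 0 and any N ≥ 1, the worst-case recovery error of the truncation method satisfies ε_δ(A,W,G̃_N,Ψ̃_N)_H = ( sup_{k ≥ N} μ_k²/ξ_k² + δ² μ_{N−1}² )^{1/2} (the supremum over k ≥ N is attained since μ_k/ξ_k → 0). -/

import Mathlib

noncomputable section

open Filter
open scoped ENNReal RealInnerProductSpace

variable {H : Type*} [NormedAddCommGroup H] [InnerProductSpace ℝ H] [CompleteSpace H]

/-- `f` belongs to the source set `W`. -/
def MemW (w : ℕ → H) (ξ : ℕ → ℝ) (f : H) : Prop :=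
  Summable fun k => ξ k ^ 2 * ⟪f, w k⟫ ^ 2

/-- The `W`-norm of `f`. -/
def normW (w : ℕ → H) (ξ : ℕ → ℝ) (f : H) : ℝ :=
  Real.sqrt (∑' k, ξ k ^ 2 * ⟪f, w k⟫ ^ 2)

/-- The unbounded operator `A`, defined spectrally by `A f = ∑ μ_k ⟨f, w_k⟩ w_k`. -/
def opA (w : ℕ → H) (μ : ℕ → ℝ) (f : H) : H :=
  ∑' k, (μ k * ⟪f, w k⟫) • w k

/-- The worst case recovery error `ε_δ(A, W, G, Ψ)_H` of the pair `(G, Ψ)`. -/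
def recErr (w : ℕ → H) (μ ξ : ℕ → ℝ) (δ : ℝ) {N : ℕ}
    (G : H → Fin N → ℝ) (Ψ : (Fin N → ℝ) → H) : ℝ≥0∞ :=
  ⨆ (f : H) (_ : MemW w ξ f ∧ normW w ξ f ≤ 1) (fδ : H) (_ : ‖f - fδ‖ ≤ δ),
    ENNReal.ofReal ‖opA w μ f - Ψ (G fδ)‖

/-- The `(N,δ)`-optimal recovery error `R_{N,δ}(A, W)_H`. -/
def Ropt (w : ℕ → H) (μ ξ : ℕ → ℝ) (δ : ℝ) (N : ℕ) : ℝ≥0∞ :=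
  ⨅ (G : H → Fin N → ℝ) (_ : Continuous G) (Ψ : (Fin N → ℝ) → H),
    recErr w μ ξ δ G Ψ

/-- The `δ`-optimal recovery error `R_δ(A, W)_H`. -/
def RoptAll (w : ℕ → H) (μ ξ : ℕ → ℝ) (δ : ℝ) : ℝ≥0∞ :=
  ⨅ N : ℕ, Ropt w μ ξ δ N

/-- The critical index `N_δ = min {N ≥ 0 : ξ_N ≥ 1/δ}`. -/
def Ncrit (ξ : ℕ → ℝ) (δ : ℝ) : ℕ := sInf {N : ℕ | 1 / δ ≤ ξ N}

/-- The information map of the truncation method: the first `N` Fourier coefficients. -/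
def Gtrunc (w : ℕ → H) (N : ℕ) (f : H) : Fin N → ℝ := fun k => ⟪f, w k⟫

/-- The recovery algorithm of the truncation method. -/
def Psitrunc (w : ℕ → H) (μ : ℕ → ℝ) (N : ℕ) (x : Fin N → ℝ) : H :=
  ∑ k : Fin N, (μ k * x k) • w k


/-- If a real sequence is positive at `0` and tends to `0`, then it attains its supremum. -/
lemma exists_forall_le_of_tendsto_zero (a : ℕ → ℝ) (h0 : 0 < a 0)
    (ha : Tendsto a atTop (nhds 0)) : ∃ j, ∀ i, a i ≤ a j := by
  obtain ⟨J, hJ⟩ := eventually_atTop.mp (ha.eventually_lt_const h0)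
  obtain ⟨j0, _, hj0⟩ := Finset.exists_max_image (Finset.range (J+1)) a ⟨0, by simp⟩
  refine ⟨j0, fun i => ?_⟩
  by_cases hi : i ≤ J
  · exact hj0 i (Finset.mem_range.mpr (by omega))
  · exact le_of_lt (lt_of_lt_of_le (hJ i (by omega)) (hj0 0 (Finset.mem_range.mpr (by omega))))

set_option maxHeartbeats 2000000 in
/-- exact worst case error of the truncation method. -/
theorem stmt2
    (w : ℕ → H) (hw_on : Orthonormal ℝ w)
    (hw_dense : Dense (Submodule.span ℝ (Set.range w) : Set H))
    (μ ξ : ℕ → ℝ)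
    (hμ0 : 0 < μ 0) (hμmono : Monotone μ) (hμtop : Tendsto μ atTop atTop)
    (hξ0 : 0 < ξ 0) (hξmono : Monotone ξ) (hξtop : Tendsto ξ atTop atTop)
    (hratio : Tendsto (fun k => μ k / ξ k) atTop (nhds 0)) :
    ∀ δ : ℝ, 0 < δ → ∀ N : ℕ, 1 ≤ N →
      recErr w μ ξ δ (Gtrunc w N) (Psitrunc w μ N) =
        ENNReal.ofReal (Real.sqrt
          ((⨆ j : ℕ, (μ (N + j) / ξ (N + j)) ^ 2) + δ ^ 2 * μ (N - 1) ^ 2)) := by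
  intro δ hδ N hN
  have hμpos : ∀ k, 0 < μ k := fun k => lt_of_lt_of_le hμ0 (hμmono (Nat.zero_le k))
  have hξpos : ∀ k, 0 < ξ k := fun k => lt_of_lt_of_le hξ0 (hξmono (Nat.zero_le k))
  -- the Hilbert basis
  have hsp : ⊤ ≤ (Submodule.span ℝ (Set.range w)).topologicalClosure := by
    intro x _
    rw [← SetLike.mem_coe, Submodule.topologicalClosure_coe]
    exact hw_dense x
  have hb : ⇑(HilbertBasis.mk hw_on hsp) = w := HilbertBasis.coe_mk _ _
  have hite : ∀ i j : ℕ, ⟪w i, w j⟫ = if i = j then (1:ℝ) else 0 := orthonormal_iff_ite.mp hw_on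
  -- Parseval
  have parseval : ∀ e : H, HasSum (fun k => ⟪e, w k⟫ ^ 2) (‖e‖ ^ 2) := by
    intro e
    have h := (HilbertBasis.mk hw_on hsp).hasSum_inner_mul_inner e e
    rw [hb] at h
    simpa [real_inner_comm, sq, real_inner_self_eq_norm_sq] using h
  -- summability criterion for series of basis vectors
  have hsummable : ∀ c : ℕ → ℝ, Summable (fun k => c k ^ 2) → Summable (fun k => c k • w k) := by
    intro c hc
    have h := (hw_on.orthogonalFamily.summable_iff_norm_sq_summable c).mpr
      (by simpa [Real.norm_eq_abs, sq_abs] using hc)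
    simpa [LinearIsometry.toSpanSingleton_apply] using h
  -- a global bound on the ratios
  have hratio_sq : Tendsto (fun k => (μ k / ξ k) ^ 2) atTop (nhds 0) := by
    simpa using hratio.pow 2
  obtain ⟨C, hC⟩ := hratio_sq.bddAbove_range
  replace hC : ∀ k, (μ k / ξ k) ^ 2 ≤ C := fun k => hC ⟨k, rfl⟩
  -- summability of the coefficients of `A f`
  have hAsum : ∀ f : H, MemW w ξ f → Summable (fun k => (μ k * ⟪f, w k⟫) ^ 2) := by
    intro f hf
    refine Summable.of_nonneg_of_le (fun k => sq_nonneg _) (fun k => ?_) (hf.mul_left C)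
    have hk := (hξpos k).ne'
    have h : (μ k * ⟪f, w k⟫) ^ 2 = (μ k / ξ k) ^ 2 * (ξ k ^ 2 * ⟪f, w k⟫ ^ 2) := by
      field_simp
    rw [h]
    exact mul_le_mul_of_nonneg_right (hC k) (by positivity)
  -- coefficients of `A f`
  have hA : ∀ f : H, MemW w ξ f → ∀ j, ⟪opA w μ f, w j⟫ = μ j * ⟪f, w j⟫ := by
    intro f hf j
    have hs : HasSum (fun k => (μ k * ⟪f, w k⟫) • w k) (opA w μ f) :=
      (hsummable _ (hAsum f hf)).hasSum
    have h2 : HasSum (fun k => ⟪w j, (μ k * ⟪f, w k⟫) • w k⟫) ⟪w j, opA w μ f⟫ :=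
      hs.mapL (innerSL ℝ (w j))
    have h3 : (fun k => ⟪w j, (μ k * ⟪f, w k⟫) • w k⟫) =
        fun k => if k = j then μ j * ⟪f, w j⟫ else 0 := by
      funext k
      rw [real_inner_smul_right, hite j k]
      by_cases h : k = j
      · subst h; simp
      · simp [h, Ne.symm h]
    rw [h3] at h2
    exact (real_inner_comm _ _).trans (h2.unique (hasSum_ite_eq j _))
  -- coefficients of the reconstruction
  have hPsi : ∀ (g : H) (j : ℕ), ⟪Psitrunc w μ N (Gtrunc w N g), w j⟫ =
      if j < N then μ j * ⟪g, w j⟫ else 0 := by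
    intro g j
    rw [Psitrunc, sum_inner]
    by_cases h : j < N
    · rw [if_pos h, Finset.sum_eq_single (⟨j, h⟩ : Fin N)]
      · simp [real_inner_smul_left, hite, Gtrunc, hw_on.1 j]
      · intro k _ hk
        have hkj : (k : ℕ) ≠ j := fun hc => hk (Fin.ext hc)
        simp [real_inner_smul_left, hite, hkj]
      · simp
    · rw [if_neg h]
      apply Finset.sum_eq_zero
      intro k _
      have hkj : (k : ℕ) ≠ j := by omega
      simp [real_inner_smul_left, hite, hkj]
  -- squared norm of the error, as a sum over the coefficients
  have key : ∀ f fδ : H, MemW w ξ f →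
      HasSum (fun j => (μ j * ⟪f, w j⟫ - if j < N then μ j * ⟪fδ, w j⟫ else 0) ^ 2)
        (‖opA w μ f - Psitrunc w μ N (Gtrunc w N fδ)‖ ^ 2) := by
    intro f fδ hf
    have hcoef : (fun j => (μ j * ⟪f, w j⟫ - if j < N then μ j * ⟪fδ, w j⟫ else 0) ^ 2) =
        fun j => ⟪opA w μ f - Psitrunc w μ N (Gtrunc w N fδ), w j⟫ ^ 2 := by
      funext j
      rw [inner_sub_left, hA f hf j, hPsi]
    rw [hcoef]
    exact parseval _
  -- the supremum
  set S : ℝ := ⨆ j : ℕ, (μ (N + j) / ξ (N + j)) ^ 2 with hSdef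
  have hatend : Tendsto (fun j => (μ (N + j) / ξ (N + j)) ^ 2) atTop (nhds 0) := by
    have h1 : Tendsto (fun j : ℕ => N + j) atTop atTop := by
      simpa [add_comm] using tendsto_add_atTop_nat N
    exact hratio_sq.comp h1
  have ha0 : 0 < (μ (N + 0) / ξ (N + 0)) ^ 2 := by
    have h1 := hμpos (N + 0); have h2 := hξpos (N + 0); positivity
  obtain ⟨js, hjs⟩ := exists_forall_le_of_tendsto_zero
    (fun j => (μ (N + j) / ξ (N + j)) ^ 2) ha0 hatend
  have hbdd : BddAbove (Set.range fun j => (μ (N + j) / ξ (N + j)) ^ 2) := by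
    refine ⟨(μ (N + js) / ξ (N + js)) ^ 2, ?_⟩
    rintro x ⟨i, rfl⟩; exact hjs i
  have hSa : S = (μ (N + js) / ξ (N + js)) ^ 2 :=
    le_antisymm (ciSup_le hjs) (le_ciSup hbdd js)
  have hSnonneg : 0 ≤ S := hSa ▸ sq_nonneg _
  have hle_S : ∀ k, N ≤ k → (μ k / ξ k) ^ 2 ≤ S := by
    intro k hk
    have h := le_ciSup hbdd (k - N)
    rwa [show N + (k - N) = k from by omega] at h
  -- upper bound
  have upper : ∀ f fδ : H, MemW w ξ f → normW w ξ f ≤ 1 → ‖f - fδ‖ ≤ δ →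
      ‖opA w μ f - Psitrunc w μ N (Gtrunc w N fδ)‖ ^ 2 ≤ S + δ ^ 2 * μ (N - 1) ^ 2 := by
    intro f fδ hf hf1 hfδ
    have hkey := key f fδ hf
    have hcs : Summable
        (fun j => (μ j * ⟪f, w j⟫ - if j < N then μ j * ⟪fδ, w j⟫ else 0) ^ 2) :=
      hkey.summable
    rw [← hkey.tsum_eq, ← Summable.sum_add_tsum_nat_add N hcs, add_comm]
    have hhead : ∑ i ∈ Finset.range N,
        (μ i * ⟪f, w i⟫ - if i < N then μ i * ⟪fδ, w i⟫ else 0) ^ 2 ≤ δ ^ 2 * μ (N - 1) ^ 2 := by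
      have h1 : ∀ i ∈ Finset.range N,
          (μ i * ⟪f, w i⟫ - if i < N then μ i * ⟪fδ, w i⟫ else 0) ^ 2 ≤
            μ (N - 1) ^ 2 * ⟪f - fδ, w i⟫ ^ 2 := by
        intro i hi
        rw [Finset.mem_range] at hi
        rw [if_pos hi, inner_sub_left]
        have h2 : μ i * ⟪f, w i⟫ - μ i * ⟪fδ, w i⟫ = μ i * (⟪f, w i⟫ - ⟪fδ, w i⟫) := by ring
        rw [h2, mul_pow]
        have h3 : μ i ^ 2 ≤ μ (N - 1) ^ 2 :=
          pow_le_pow_left₀ (hμpos i).le (hμmono (by omega)) 2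
        exact mul_le_mul_of_nonneg_right h3 (sq_nonneg _)
      calc ∑ i ∈ Finset.range N,
            (μ i * ⟪f, w i⟫ - if i < N then μ i * ⟪fδ, w i⟫ else 0) ^ 2
          ≤ ∑ i ∈ Finset.range N, μ (N - 1) ^ 2 * ⟪f - fδ, w i⟫ ^ 2 :=
            Finset.sum_le_sum h1
        _ = μ (N - 1) ^ 2 * ∑ i ∈ Finset.range N, ⟪f - fδ, w i⟫ ^ 2 := by
            rw [Finset.mul_sum]
        _ ≤ μ (N - 1) ^ 2 * ‖f - fδ‖ ^ 2 := by
            refine mul_le_mul_of_nonneg_left ?_ (sq_nonneg _)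
            have hB := hw_on.sum_inner_products_le (s := Finset.range N) (f - fδ)
            simpa [Real.norm_eq_abs, sq_abs, real_inner_comm] using hB
        _ ≤ μ (N - 1) ^ 2 * δ ^ 2 :=
            mul_le_mul_of_nonneg_left (pow_le_pow_left₀ (norm_nonneg _) hfδ 2) (sq_nonneg _)
        _ = δ ^ 2 * μ (N - 1) ^ 2 := by ring
    have htail : ∑' i,
        (μ (i + N) * ⟪f, w (i + N)⟫ -
          if i + N < N then μ (i + N) * ⟪fδ, w (i + N)⟫ else 0) ^ 2 ≤ S := by
      have hfull_nonneg : (0:ℝ) ≤ ∑' k, ξ k ^ 2 * ⟪f, w k⟫ ^ 2 :=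
        tsum_nonneg fun k => by positivity
      have hfull_le : ∑' k, ξ k ^ 2 * ⟪f, w k⟫ ^ 2 ≤ 1 := by
        have h1 : Real.sqrt (∑' k, ξ k ^ 2 * ⟪f, w k⟫ ^ 2) ≤ 1 := hf1
        calc ∑' k, ξ k ^ 2 * ⟪f, w k⟫ ^ 2
            = Real.sqrt (∑' k, ξ k ^ 2 * ⟪f, w k⟫ ^ 2) ^ 2 := (Real.sq_sqrt hfull_nonneg).symm
          _ ≤ 1 ^ 2 := pow_le_pow_left₀ (Real.sqrt_nonneg _) h1 2
          _ = 1 := one_pow 2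
      have htsummable : Summable (fun i => ξ (i + N) ^ 2 * ⟪f, w (i + N)⟫ ^ 2) :=
        (summable_nat_add_iff N).mpr hf
      have htail_le_one : ∑' i, ξ (i + N) ^ 2 * ⟪f, w (i + N)⟫ ^ 2 ≤ 1 := by
        have h2 := Summable.sum_add_tsum_nat_add (f := fun k => ξ k ^ 2 * ⟪f, w k⟫ ^ 2) N hf
        have h3 : (0:ℝ) ≤ ∑ i ∈ Finset.range N, ξ i ^ 2 * ⟪f, w i⟫ ^ 2 :=
          Finset.sum_nonneg fun i _ => by positivity
        linarith
      have hterm : ∀ i,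
          (μ (i + N) * ⟪f, w (i + N)⟫ -
            if i + N < N then μ (i + N) * ⟪fδ, w (i + N)⟫ else 0) ^ 2 ≤
          S * (ξ (i + N) ^ 2 * ⟪f, w (i + N)⟫ ^ 2) := by
        intro i
        rw [if_neg (by omega)]
        have hk := (hξpos (i + N)).ne'
        have h4 : (μ (i + N) * ⟪f, w (i + N)⟫ - 0) ^ 2 =
            (μ (i + N) / ξ (i + N)) ^ 2 * (ξ (i + N) ^ 2 * ⟪f, w (i + N)⟫ ^ 2) := by
          field_simp; ring
        rw [h4]
        exact mul_le_mul_of_nonneg_right (hle_S (i + N) (by omega)) (by positivity)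
      calc ∑' i, (μ (i + N) * ⟪f, w (i + N)⟫ -
              if i + N < N then μ (i + N) * ⟪fδ, w (i + N)⟫ else 0) ^ 2
          ≤ ∑' i, S * (ξ (i + N) ^ 2 * ⟪f, w (i + N)⟫ ^ 2) :=
            Summable.tsum_le_tsum hterm ((summable_nat_add_iff N).mpr hcs) (htsummable.mul_left S)
        _ = S * ∑' i, ξ (i + N) ^ 2 * ⟪f, w (i + N)⟫ ^ 2 := tsum_mul_left
        _ ≤ S * 1 := mul_le_mul_of_nonneg_left htail_le_one hSnonneg
        _ = S := mul_one S
    exact add_le_add htail hhead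
  -- the extremal instance
  set f₀ : H := (ξ (N + js))⁻¹ • w (N + js) with hf₀def
  have hf₀coef : ∀ j, ⟪f₀, w j⟫ = if j = N + js then (ξ (N + js))⁻¹ else 0 := by
    intro j
    rw [hf₀def, real_inner_smul_left, hite (N + js) j]
    by_cases h : j = N + js
    · subst h; simp
    · simp [h, Ne.symm h]
  have hf₀fun : (fun k => ξ k ^ 2 * ⟪f₀, w k⟫ ^ 2) =
      fun k => if k = N + js then (1:ℝ) else 0 := by
    funext k
    rw [hf₀coef k]
    by_cases h : k = N + js
    · subst h
      have hne : ξ (N + js) ≠ 0 := (hξpos (N + js)).ne'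
      rw [if_pos rfl, if_pos rfl]
      field_simp
    · simp [h]
  have hf₀mem : MemW w ξ f₀ := by
    rw [MemW, hf₀fun]
    exact (hasSum_ite_eq (N + js) (1:ℝ)).summable
  have hf₀norm : normW w ξ f₀ ≤ 1 := by
    rw [normW, hf₀fun, tsum_ite_eq, Real.sqrt_one]
  set f₁ : H := f₀ - δ • w (N - 1) with hf₁def
  have hdist : ‖f₀ - f₁‖ ≤ δ := by
    rw [hf₁def, sub_sub_cancel, norm_smul, hw_on.1 (N - 1)]
    simp [abs_of_pos hδ]
  have hf₁coef : ∀ j, ⟪f₁, w j⟫ =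
      (if j = N + js then (ξ (N + js))⁻¹ else 0) - δ * (if j = N - 1 then 1 else 0) := by
    intro j
    rw [hf₁def, inner_sub_left, hf₀coef, real_inner_smul_left, hite (N - 1) j]
    by_cases h : j = N - 1
    · subst h; simp
    · simp [h, Ne.symm h]
  have hval : ‖opA w μ f₀ - Psitrunc w μ N (Gtrunc w N f₁)‖ ^ 2 =
      S + δ ^ 2 * μ (N - 1) ^ 2 := by
    have hkey := key f₀ f₁ hf₀mem
    have hfun : (fun j => (μ j * ⟪f₀, w j⟫ - if j < N then μ j * ⟪f₁, w j⟫ else 0) ^ 2) =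
        fun j => (if j = N + js then (μ (N + js) / ξ (N + js)) ^ 2 else 0) +
          (if j = N - 1 then δ ^ 2 * μ (N - 1) ^ 2 else 0) := by
      funext j
      rw [hf₀coef, hf₁coef]
      by_cases h1 : j = N + js
      · subst h1
        have hx : ¬ N + js < N := by omega
        have hy : N + js ≠ N - 1 := by omega
        simp only [if_neg hx, if_pos rfl, if_neg hy, if_true, eq_self_iff_true, ite_true]
        rw [div_eq_mul_inv]
        ring
      · by_cases h2 : j = N - 1
        · subst h2
          have hx : N - 1 < N := by omega
          simp only [if_pos hx, if_neg h1, if_pos rfl, if_true, eq_self_iff_true, ite_true]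
          ring
        · simp only [if_neg h1, if_neg h2]
          by_cases h3 : j < N
          · simp only [if_pos h3]; ring
          · simp only [if_neg h3]; ring
    rw [hfun] at hkey
    have h2 : HasSum (fun j => (if j = N + js then (μ (N + js) / ξ (N + js)) ^ 2 else 0) +
        (if j = N - 1 then δ ^ 2 * μ (N - 1) ^ 2 else 0))
        ((μ (N + js) / ξ (N + js)) ^ 2 + δ ^ 2 * μ (N - 1) ^ 2) :=
      (hasSum_ite_eq (N + js) _).add (hasSum_ite_eq (N - 1) _)
    rw [hkey.unique h2, hSa]
  have hT_nonneg : (0:ℝ) ≤ S + δ ^ 2 * μ (N - 1) ^ 2 := by positivity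
  -- conclusion
  rw [recErr]
  apply le_antisymm
  · refine iSup_le fun f => iSup_le fun hf => iSup_le fun fδ => iSup_le fun hfδ => ?_
    apply ENNReal.ofReal_le_ofReal
    have hb2 := upper f fδ hf.1 hf.2 hfδ
    calc ‖opA w μ f - Psitrunc w μ N (Gtrunc w N fδ)‖
        = Real.sqrt (‖opA w μ f - Psitrunc w μ N (Gtrunc w N fδ)‖ ^ 2) :=
          (Real.sqrt_sq (norm_nonneg _)).symm
      _ ≤ Real.sqrt (S + δ ^ 2 * μ (N - 1) ^ 2) := Real.sqrt_le_sqrt hb2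
  · have heq : Real.sqrt (S + δ ^ 2 * μ (N - 1) ^ 2) =
        ‖opA w μ f₀ - Psitrunc w μ N (Gtrunc w N f₁)‖ := by
      rw [← hval, Real.sqrt_sq (norm_nonneg _)]
    rw [heq]
    exact le_iSup_of_le f₀ (le_iSup_of_le ⟨hf₀mem, hf₀norm⟩
      (le_iSup_of_le f₁ (le_iSup_of_le hdist (le_refl _))))
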